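/- Let (a_n) be a bounded sequence of real numbers with a := sup_n |a_n|, and let g : ℝ → ℝ be continuous with g(t) → +∞ as t → +∞ and g(t) → −∞ as t → −∞. Define f_n : ℝ × ℝ → ℝ by f_n(t,x) = a_n · e^{−|g(t) − x|}. Then the family {f_n : n ∈ ℕ} satisfies condition (EP): for every ε > 0 and every compact set D ⊆ ℝ there exists R > 0 such that for all n,m ∈ ℕ and all t with |t| > R, ∫_D |a_n e^{−|g(t) − x|} − a_m e^{−|g(t) − x|}| dx < ε. -/

import Mathlib

open Set Filter Topology MeasureTheory

/-- For a bounded sequence `(aₙ)` of reals and a continuous `g : ℝ → ℝ` with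
`g(t) → +∞` as `t → +∞` and `g(t) → −∞` as `t → −∞`, the family
`fₙ(t, x) = aₙ · exp (−|g t − x|)` satisfies condition (EP). -/
theorem diracLikeFamily_EP
    (a : ℕ → ℝ) (ha : ∃ C : ℝ, ∀ n : ℕ, |a n| ≤ C)
    (g : ℝ → ℝ) (hg : Continuous g)
    (htop : Tendsto g atTop atTop) (hbot : Tendsto g atBot atBot) :
    ∀ ε > (0 : ℝ), ∀ D : Set ℝ, IsCompact D → ∃ R > (0 : ℝ),
      ∀ n m : ℕ, ∀ t : ℝ, R < |t| →
        ∫ x in D, |a n * Real.exp (-|g t - x|) - a m * Real.exp (-|g t - x|)| < ε := by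
  obtain ⟨C, hC⟩ := ha
  intro ε hε D hD
  have hC0 : 0 ≤ C := le_trans (abs_nonneg _) (hC 0)
  set V : ℝ := (volume D).toReal + 1 with hVdef
  have hV0 : 0 < V := by
    have := ENNReal.toReal_nonneg (a := volume D)
    linarith
  set δ : ℝ := ε / ((2 * C + 1) * V) with hδdef
  have hδ : 0 < δ := by positivity
  set K : ℝ := -Real.log δ + 1 with hKdef
  have hK : Real.exp (-K) < δ := by
    have h1 : Real.exp (-K) < Real.exp (Real.log δ) := by
      apply Real.exp_lt_exp.2
      rw [hKdef]; linarith [Real.exp_pos (1 : ℝ)]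
    rwa [Real.exp_log hδ] at h1
  obtain ⟨M, hM⟩ := hD.isBounded.subset_closedBall 0
  obtain ⟨T1, hT1⟩ := eventually_atTop.1 (htop.eventually (eventually_ge_atTop (M + K)))
  obtain ⟨T2, hT2⟩ := eventually_atBot.1 (hbot.eventually (eventually_le_atBot (-(M + K))))
  refine ⟨max |T1| |T2| + 1, by positivity, ?_⟩
  intro n m t ht
  -- |g t| ≥ M + K
  have habsg : M + K ≤ |g t| := by
    rcases le_or_gt 0 t with h0 | h0
    · have : T1 ≤ t := by
        rw [abs_of_nonneg h0] at ht
        have := le_abs_self T1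
        have := le_max_left |T1| |T2|
        linarith
      have := hT1 t this
      calc M + K ≤ g t := this
        _ ≤ |g t| := le_abs_self _
    · have : t ≤ T2 := by
        rw [abs_of_neg h0] at ht
        have := neg_abs_le T2
        have := le_max_right |T1| |T2|
        linarith
      have h2 := hT2 t this
      calc M + K ≤ -(g t) := by linarith
        _ ≤ |g t| := neg_le_abs _
  -- pointwise bound
  have hbound : ∀ x ∈ D, ‖|a n * Real.exp (-|g t - x|) - a m * Real.exp (-|g t - x|)|‖
      ≤ (2 * C) * Real.exp (-K) := by
    intro x hx
    have hxM : |x| ≤ M := by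
      have := hM hx
      simpa [Metric.mem_closedBall, Real.dist_eq] using this
    have hKle : K ≤ |g t - x| := by
      have := abs_sub_abs_le_abs_sub (g t) x
      linarith
    have hexp : Real.exp (-|g t - x|) ≤ Real.exp (-K) := by
      apply Real.exp_le_exp.2; linarith
    have hexp0 : 0 < Real.exp (-|g t - x|) := Real.exp_pos _
    rw [Real.norm_eq_abs, abs_abs, ← sub_mul, abs_mul, abs_of_pos hexp0]
    have hab : |a n - a m| ≤ 2 * C := by
      have h1 := hC n; have h2 := hC m
      have := abs_sub (a n) (a m)
      calc |a n - a m| ≤ |a n| + |a m| := abs_sub _ _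
        _ ≤ 2 * C := by linarith
    calc |a n - a m| * Real.exp (-|g t - x|)
        ≤ (2 * C) * Real.exp (-|g t - x|) := by
          apply mul_le_mul_of_nonneg_right hab (le_of_lt hexp0)
      _ ≤ (2 * C) * Real.exp (-K) := by
          apply mul_le_mul_of_nonneg_left hexp (by positivity)
  have hmeas : MeasurableSet D := hD.measurableSet
  have hint := norm_setIntegral_le_of_norm_le_const_ae' (μ := volume) (s := D)
    hD.measure_lt_top (Eventually.of_forall hbound)
  have hle : (∫ x in D, |a n * Real.exp (-|g t - x|) - a m * Real.exp (-|g t - x|)|)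
      ≤ (2 * C) * Real.exp (-K) * (volume D).toReal := by
    calc (∫ x in D, |a n * Real.exp (-|g t - x|) - a m * Real.exp (-|g t - x|)|)
        ≤ ‖∫ x in D, |a n * Real.exp (-|g t - x|) - a m * Real.exp (-|g t - x|)|‖ :=
          le_abs_self _
      _ ≤ _ := hint
  have hVle : (volume D).toReal ≤ V := by rw [hVdef]; linarith
  have hfinal : (2 * C) * Real.exp (-K) * (volume D).toReal < ε := by
    have h1 : (2 * C) * Real.exp (-K) * (volume D).toReal
        ≤ (2 * C + 1) * Real.exp (-K) * V := by
      have he := (Real.exp_pos (-K)).le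
      have hstep : (2 * C) * Real.exp (-K) ≤ (2 * C + 1) * Real.exp (-K) :=
        mul_le_mul_of_nonneg_right (by linarith) he
      exact mul_le_mul hstep hVle ENNReal.toReal_nonneg (by positivity)
    have h2 : (2 * C + 1) * Real.exp (-K) * V < (2 * C + 1) * δ * V := by
      have hpos : (0:ℝ) < 2 * C + 1 := by linarith
      exact mul_lt_mul_of_pos_right (mul_lt_mul_of_pos_left hK hpos) hV0
    have h3 : (2 * C + 1) * δ * V = ε := by
      rw [hδdef]; field_simp
    linarith
  linarith
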